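/- Let n ≥ 2 and let 0 < p_1 < p_2 < ⋯ < p_n < 1 be real numbers. Then the partial derivative with respect to p_1 of the function F_n(p_1,…,p_n) = ∫₀¹ ∫₀¹ min_{1 ≤ i ≤ n} (|x − p_i| + |y − p_i|) dy dx, evaluated at (p_1,…,p_n), equals p_1² + 2 p_1 p_2 − p_2². -/

import Mathlib

lemma key_ineq (t a b x y : ℝ) (h1 : t < a) (h2 : a ≤ b)
    (h : |x - t| + |y - t| < |x - a| + |y - a|) :
    |x - a| + |y - a| ≤ |x - b| + |y - b| := by
  rcases abs_cases (x - t) with ⟨e1, f1⟩ | ⟨e1, f1⟩ <;>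
  rcases abs_cases (y - t) with ⟨e2, f2⟩ | ⟨e2, f2⟩ <;>
  rcases abs_cases (x - a) with ⟨e3, f3⟩ | ⟨e3, f3⟩ <;>
  rcases abs_cases (y - a) with ⟨e4, f4⟩ | ⟨e4, f4⟩ <;>
  rcases abs_cases (x - b) with ⟨e5, f5⟩ | ⟨e5, f5⟩ <;>
  rcases abs_cases (y - b) with ⟨e6, f6⟩ | ⟨e6, f6⟩ <;>
  linarith

lemma integral_lin (a b c e : ℝ) :
    ∫ x in a..b, (c + e * x) = c * (b - a) + e * (b ^ 2 - a ^ 2) / 2 := by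
  have h1 : IntervalIntegrable (fun _ : ℝ => c) MeasureTheory.volume a b :=
    intervalIntegrable_const
  have h2 : IntervalIntegrable (fun x : ℝ => e * x) MeasureTheory.volume a b := by
    apply Continuous.intervalIntegrable; fun_prop
  rw [intervalIntegral.integral_add h1 h2, intervalIntegral.integral_const_mul, integral_id]
  simp; ring

lemma integral_quad (a b c e f : ℝ) :
    ∫ x in a..b, (c + e * x + f * x ^ 2)
      = c * (b - a) + e * (b ^ 2 - a ^ 2) / 2 + f * (b ^ 3 - a ^ 3) / 3 := by
  have h1 : IntervalIntegrable (fun x : ℝ => c + e * x) MeasureTheory.volume a b := by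
    apply Continuous.intervalIntegrable; fun_prop
  have h2 : IntervalIntegrable (fun x : ℝ => f * x ^ 2) MeasureTheory.volume a b := by
    apply Continuous.intervalIntegrable; fun_prop
  rw [intervalIntegral.integral_add h1 h2, integral_lin,
    intervalIntegral.integral_const_mul, integral_pow]
  norm_num; ring

open intervalIntegral MeasureTheory

noncomputable def mfun (t a x y : ℝ) : ℝ :=
  min (|x - t| + |y - t| - (|x - a| + |y - a|)) 0

lemma mfun_cont_xy (t a : ℝ) : Continuous (Function.uncurry (mfun t a)) := by
  simp only [Function.uncurry_def]; unfold mfun; fun_prop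

lemma mfun_cont_y (t a x : ℝ) : Continuous (fun y => mfun t a x y) := by
  unfold mfun; fun_prop

lemma inner1 (t a x : ℝ) (ht0 : 0 ≤ t) (hta : t ≤ a) (ha1 : a ≤ 1)
    (hx0 : 0 ≤ x) (hxt : x ≤ t) :
    ∫ y in (0:ℝ)..1, mfun t a x y = t ^ 2 - a ^ 2 := by
  have hint : ∀ u v : ℝ, IntervalIntegrable (fun y => mfun t a x y) volume u v :=
    fun u v => (mfun_cont_y t a x).intervalIntegrable u v
  rw [← integral_add_adjacent_intervals (b := t) (hint 0 t) (hint t 1),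
      ← integral_add_adjacent_intervals (a := t) (b := a) (hint t a) (hint a 1)]
  have e1 : ∫ y in (0:ℝ)..t, mfun t a x y = ∫ y in (0:ℝ)..t, (2*t - 2*a + 0 * y) := by
    apply integral_congr
    intro y hy
    rw [Set.uIcc_of_le ht0] at hy
    obtain ⟨hy0, hyt⟩ := hy
    unfold mfun
    rw [abs_of_nonpos (by linarith), abs_of_nonpos (by linarith),
        abs_of_nonpos (by linarith), abs_of_nonpos (by linarith),
        min_eq_left (by linarith)]
    ring
  have e2 : ∫ y in t..a, mfun t a x y = ∫ y in t..a, (-(2*a) + 2 * y) := by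
    apply integral_congr
    intro y hy
    rw [Set.uIcc_of_le hta] at hy
    obtain ⟨hyt, hya⟩ := hy
    unfold mfun
    rw [abs_of_nonpos (by linarith), abs_of_nonneg (by linarith),
        abs_of_nonpos (by linarith), abs_of_nonpos (by linarith),
        min_eq_left (by linarith)]
    ring
  have e3 : ∫ y in a..1, mfun t a x y = ∫ y in a..1, ((0:ℝ) + 0 * y) := by
    apply integral_congr
    intro y hy
    rw [Set.uIcc_of_le ha1] at hy
    obtain ⟨hya, hy1⟩ := hy
    unfold mfun
    rw [abs_of_nonpos (by linarith), abs_of_nonneg (by linarith),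
        abs_of_nonpos (by linarith), abs_of_nonneg (by linarith),
        min_eq_right (by linarith)]
    simp
  rw [e1, e2, e3, integral_lin, integral_lin, integral_lin]
  ring

lemma inner2 (t a x : ℝ) (ht0 : 0 ≤ t) (htx : t ≤ x) (hxa : x ≤ a) (ha1 : a ≤ 1) :
    ∫ y in (0:ℝ)..1, mfun t a x y = -x ^ 2 + 2 * (t + a) * x - 2 * t * a - a ^ 2 := by
  have hint : ∀ u v : ℝ, IntervalIntegrable (fun y => mfun t a x y) volume u v :=
    fun u v => (mfun_cont_y t a x).intervalIntegrable u v
  rw [← integral_add_adjacent_intervals (b := t) (hint 0 t) (hint t 1),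
      ← integral_add_adjacent_intervals (a := t) (b := t + a - x) (hint t _) (hint _ 1),
      ← integral_add_adjacent_intervals (a := t + a - x) (b := a) (hint _ a) (hint a 1)]
  have e1 : ∫ y in (0:ℝ)..t, mfun t a x y = ∫ y in (0:ℝ)..t, (2*x - 2*a + 0 * y) := by
    apply integral_congr
    intro y hy
    rw [Set.uIcc_of_le ht0] at hy
    obtain ⟨hy0, hyt⟩ := hy
    unfold mfun
    rw [abs_of_nonneg (by linarith), abs_of_nonpos (by linarith),
        abs_of_nonpos (by linarith), abs_of_nonpos (by linarith),
        min_eq_left (by linarith)]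
    ring
  have e2 : ∫ y in t..(t + a - x), mfun t a x y
      = ∫ y in t..(t + a - x), (2*x - 2*t - 2*a + 2 * y) := by
    apply integral_congr
    intro y hy
    rw [Set.uIcc_of_le (by linarith)] at hy
    obtain ⟨hyt, hya⟩ := hy
    unfold mfun
    rw [abs_of_nonneg (by linarith), abs_of_nonneg (by linarith),
        abs_of_nonpos (by linarith), abs_of_nonpos (by linarith),
        min_eq_left (by linarith)]
    ring
  have e3 : ∫ y in (t + a - x)..a, mfun t a x y = ∫ y in (t + a - x)..a, ((0:ℝ) + 0 * y) := by
    apply integral_congr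
    intro y hy
    rw [Set.uIcc_of_le (by linarith)] at hy
    obtain ⟨hya, hy1⟩ := hy
    unfold mfun
    rw [abs_of_nonneg (by linarith), abs_of_nonneg (by linarith),
        abs_of_nonpos (by linarith), abs_of_nonpos (by linarith),
        min_eq_right (by linarith)]
    simp
  have e4 : ∫ y in a..1, mfun t a x y = ∫ y in a..1, ((0:ℝ) + 0 * y) := by
    apply integral_congr
    intro y hy
    rw [Set.uIcc_of_le ha1] at hy
    obtain ⟨hya, hy1⟩ := hy
    unfold mfun
    rw [abs_of_nonneg (by linarith), abs_of_nonneg (by linarith),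
        abs_of_nonpos (by linarith), abs_of_nonneg (by linarith),
        min_eq_right (by linarith)]
    simp
  rw [e1, e2, e3, e4, integral_lin, integral_lin, integral_lin, integral_lin]
  ring

lemma inner3 (t a x : ℝ) (hta : t ≤ a) (hax : a ≤ x) :
    ∫ y in (0:ℝ)..1, mfun t a x y = 0 := by
  have : ∀ y : ℝ, mfun t a x y = 0 := by
    intro y
    unfold mfun
    rw [abs_of_nonneg (show (0:ℝ) ≤ x - t by linarith),
        abs_of_nonneg (show (0:ℝ) ≤ x - a by linarith)]
    apply min_eq_right
    have := abs_sub_abs_le_abs_sub (y - a) (y - t)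
    have h2 : |y - a - (y - t)| = a - t := by
      rw [show y - a - (y - t) = -(a - t) by ring, abs_neg, abs_of_nonneg (by linarith)]
    linarith
  simp [this]

lemma outer_calc (t a : ℝ) (ht0 : 0 ≤ t) (hta : t ≤ a) (ha1 : a ≤ 1) :
    ∫ x in (0:ℝ)..1, ∫ y in (0:ℝ)..1, mfun t a x y
      = t ^ 3 / 3 + a * t ^ 2 - a ^ 2 * t - a ^ 3 / 3 := by
  have hcont : Continuous (fun x => ∫ y in (0:ℝ)..1, mfun t a x y) := by
    apply intervalIntegral.continuous_parametric_intervalIntegral_of_continuous'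
    exact mfun_cont_xy t a
  have hint : ∀ u v : ℝ, IntervalIntegrable (fun x => ∫ y in (0:ℝ)..1, mfun t a x y) volume u v :=
    fun u v => hcont.intervalIntegrable u v
  rw [← integral_add_adjacent_intervals (b := t) (hint 0 t) (hint t 1),
      ← integral_add_adjacent_intervals (a := t) (b := a) (hint t a) (hint a 1)]
  have e1 : ∫ x in (0:ℝ)..t, (∫ y in (0:ℝ)..1, mfun t a x y)
      = ∫ x in (0:ℝ)..t, (t ^ 2 - a ^ 2 + 0 * x) := by
    apply integral_congr
    intro x hx
    rw [Set.uIcc_of_le ht0] at hx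
    beta_reduce
    rw [inner1 t a x ht0 hta ha1 hx.1 hx.2]
    ring
  have e2 : ∫ x in t..a, (∫ y in (0:ℝ)..1, mfun t a x y)
      = ∫ x in t..a, (-2 * t * a - a ^ 2 + 2 * (t + a) * x + (-1) * x ^ 2) := by
    apply integral_congr
    intro x hx
    rw [Set.uIcc_of_le hta] at hx
    beta_reduce
    rw [inner2 t a x ht0 hx.1 hx.2 ha1]
    ring
  have e3 : ∫ x in a..1, (∫ y in (0:ℝ)..1, mfun t a x y)
      = ∫ x in a..1, ((0:ℝ) + 0 * x) := by
    apply integral_congr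
    intro x hx
    rw [Set.uIcc_of_le ha1] at hx
    beta_reduce
    rw [inner3 t a x hta hx.1]
    ring
  rw [e1, e2, e3, integral_lin, integral_quad, integral_lin]
  ring

lemma inf_split (n : ℕ) (hn : 2 ≤ n) (f : ℕ → ℝ)
    (h1 : (Finset.Icc 1 n).Nonempty) (h2 : (Finset.Icc 2 n).Nonempty) :
    (Finset.Icc 1 n).inf' h1 f = min (f 1) ((Finset.Icc 2 n).inf' h2 f) := by
  apply le_antisymm
  · apply le_min
    · exact Finset.inf'_le f (Finset.mem_Icc.mpr ⟨le_rfl, le_trans one_le_two hn⟩)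
    · exact Finset.inf'_mono f (fun i hi => by
        simp only [Finset.mem_Icc] at *; omega) h2
  · apply Finset.le_inf'
    intro i hi
    rw [Finset.mem_Icc] at hi
    rcases eq_or_lt_of_le hi.1 with h | h
    · rw [← h]; exact min_le_left _ _
    · exact le_trans (min_le_right _ _)
        (Finset.inf'_le f (Finset.mem_Icc.mpr ⟨h, hi.2⟩))

lemma pointwise_eq (n : ℕ) (hn : 2 ≤ n) (p : ℕ → ℝ)
    (hmono : ∀ i j, 1 ≤ i → i < j → j ≤ n → p i < p j)
    (t x y : ℝ) (ht : t < p 2) :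
    (Finset.Icc 1 n).inf' (Finset.nonempty_Icc.mpr (le_trans one_le_two hn))
        (fun i => |x - Function.update p 1 t i| + |y - Function.update p 1 t i|)
      = (Finset.Icc 2 n).inf' (Finset.nonempty_Icc.mpr hn)
          (fun i => |x - p i| + |y - p i|)
        + mfun t (p 2) x y := by
  have h2 : (Finset.Icc 2 n).Nonempty := Finset.nonempty_Icc.mpr hn
  rw [inf_split n hn _ _ h2]
  have hcongr : (Finset.Icc 2 n).inf' h2
      (fun i => |x - Function.update p 1 t i| + |y - Function.update p 1 t i|)
      = (Finset.Icc 2 n).inf' h2 (fun i => |x - p i| + |y - p i|) := by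
    apply Finset.inf'_congr h2 rfl
    intro i hi
    rw [Finset.mem_Icc] at hi
    rw [Function.update_of_ne (by omega)]
  rw [hcongr, Function.update_self]
  set A := |x - t| + |y - t| with hA
  set b2 := |x - p 2| + |y - p 2| with hb2
  set B := (Finset.Icc 2 n).inf' h2 (fun i => |x - p i| + |y - p i|) with hB
  have hB2 : B ≤ b2 := Finset.inf'_le _ (Finset.mem_Icc.mpr ⟨le_rfl, hn⟩)
  have hmf : mfun t (p 2) x y = min (A - b2) 0 := rfl
  rcases lt_or_ge A b2 with h | h
  · have hBeq : B = b2 := by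
      apply le_antisymm hB2
      apply Finset.le_inf'
      intro i hi
      rw [Finset.mem_Icc] at hi
      have hle : p 2 ≤ p i := by
        rcases eq_or_lt_of_le hi.1 with h' | h'
        · rw [h']
        · exact (hmono 2 i one_le_two h' hi.2).le
      exact key_ineq t (p 2) (p i) x y ht hle h
    rw [min_eq_left (by rw [hBeq]; exact h.le), hmf, min_eq_left (by linarith), hBeq]
    ring
  · rw [min_eq_right (le_trans hB2 h), hmf, min_eq_right (by linarith)]
    ring

theorem stmt_10 (n : ℕ) (hn : 2 ≤ n) (p : ℕ → ℝ)
    (hp0 : 0 < p 1) (hp1 : p n < 1)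
    (hmono : ∀ i j, 1 ≤ i → i < j → j ≤ n → p i < p j) :
    HasDerivAt
      (fun t : ℝ =>
        ∫ x in (0:ℝ)..1, ∫ y in (0:ℝ)..1,
          (Finset.Icc 1 n).inf' (Finset.nonempty_Icc.mpr (le_trans one_le_two hn))
            (fun i => |x - Function.update p 1 t i| + |y - Function.update p 1 t i|))
      (p 1 ^ 2 + 2 * p 1 * p 2 - p 2 ^ 2) (p 1) := by
  have h2 : (Finset.Icc 2 n).Nonempty := Finset.nonempty_Icc.mpr hn
  set a := p 2 with ha
  have h12 : p 1 < a := hmono 1 2 le_rfl one_lt_two hn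
  have ha1 : a ≤ 1 := by
    rcases eq_or_lt_of_le hn with h | h
    · rw [ha, h]; exact hp1.le
    · exact (hmono 2 n one_le_two h le_rfl).le.trans hp1.le
  set B : ℝ → ℝ → ℝ := fun x y => (Finset.Icc 2 n).inf' h2 (fun i => |x - p i| + |y - p i|)
    with hBdef
  have hBcont : Continuous (Function.uncurry B) := by
    simp only [Function.uncurry_def]
    apply Continuous.finset_inf'_apply h2
    intro i _
    fun_prop
  have hBconty : ∀ x : ℝ, Continuous (fun y => B x y) :=
    fun x => hBcont.comp (Continuous.prodMk_right x)
  set C : ℝ := ∫ x in (0:ℝ)..1, ∫ y in (0:ℝ)..1, B x y with hC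
  have hev : (fun t : ℝ =>
        ∫ x in (0:ℝ)..1, ∫ y in (0:ℝ)..1,
          (Finset.Icc 1 n).inf' (Finset.nonempty_Icc.mpr (le_trans one_le_two hn))
            (fun i => |x - Function.update p 1 t i| + |y - Function.update p 1 t i|))
      =ᶠ[nhds (p 1)] (fun t : ℝ =>
        C + (t ^ 3 / 3 + a * t ^ 2 - a ^ 2 * t - a ^ 3 / 3)) := by
    filter_upwards [isOpen_Ioo.mem_nhds (show p 1 ∈ Set.Ioo 0 a from ⟨hp0, h12⟩)] with t ht
    obtain ⟨ht0, hta⟩ := ht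
    have step1 : (∫ x in (0:ℝ)..1, ∫ y in (0:ℝ)..1,
          (Finset.Icc 1 n).inf' (Finset.nonempty_Icc.mpr (le_trans one_le_two hn))
            (fun i => |x - Function.update p 1 t i| + |y - Function.update p 1 t i|))
        = ∫ x in (0:ℝ)..1, ∫ y in (0:ℝ)..1, (B x y + mfun t a x y) := by
      apply intervalIntegral.integral_congr
      intro x _
      beta_reduce
      apply intervalIntegral.integral_congr
      intro y _
      beta_reduce
      exact pointwise_eq n hn p hmono t x y hta
    have step2 : (∫ x in (0:ℝ)..1, ∫ y in (0:ℝ)..1, (B x y + mfun t a x y))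
        = ∫ x in (0:ℝ)..1, ((∫ y in (0:ℝ)..1, B x y) + ∫ y in (0:ℝ)..1, mfun t a x y) := by
      apply intervalIntegral.integral_congr
      intro x _
      beta_reduce
      rw [intervalIntegral.integral_add ((hBconty x).intervalIntegrable 0 1)
        ((mfun_cont_y t a x).intervalIntegrable 0 1)]
    have step3 : (∫ x in (0:ℝ)..1, ((∫ y in (0:ℝ)..1, B x y) + ∫ y in (0:ℝ)..1, mfun t a x y))
        = C + ∫ x in (0:ℝ)..1, ∫ y in (0:ℝ)..1, mfun t a x y := by
      rw [intervalIntegral.integral_add]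
      · exact (intervalIntegral.continuous_parametric_intervalIntegral_of_continuous'
          hBcont 0 1).intervalIntegrable 0 1
      · exact (intervalIntegral.continuous_parametric_intervalIntegral_of_continuous'
          (mfun_cont_xy t a) 0 1).intervalIntegrable 0 1
    rw [step1, step2, step3, outer_calc t a ht0.le hta.le ha1]
  apply HasDerivAt.congr_of_eventuallyEq _ hev
  have hd : HasDerivAt (fun t : ℝ => C + (t ^ 3 / 3 + a * t ^ 2 - a ^ 2 * t - a ^ 3 / 3))
      ((3 : ℕ) * p 1 ^ 2 / 3 + a * ((2 : ℕ) * p 1 ^ 1) - a ^ 2 * 1) (p 1) := by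
    apply HasDerivAt.const_add
    exact ((((hasDerivAt_pow 3 (p 1)).div_const 3).add
      ((hasDerivAt_pow 2 (p 1)).const_mul a)).sub
      ((hasDerivAt_id (p 1)).const_mul (a ^ 2))).sub_const (a ^ 3 / 3)
  refine hd.congr_deriv ?_
  push_cast
  ring
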